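/- With notation as in the previous statement (A free supercommutative on even x_i, odd θ_i, odd e_i, even u_i; d the odd derivation d(x_i)=e_i, d(θ_i)=u_i, d(e_i)=0=d(u_i); ω = Σ e_i u_i; ι_i the odd derivation with ι_i(e_j)=δ_{ij}): for every f in the subalgebra generated by the x's and θ's with f even, setting α := −Σ_i (∂_{θ_i} f)·ι_i(e_1⋯e_n), there exists β ∈ A such that d(α) = (Σ_{i=1}^n ∂_{x_i}∂_{θ_i} f) · e_1 e_2 ⋯ e_n + ω·β. -/
import Mathlib


/-!
Same model as the previous statement: the free supercommutative superalgebra over `ℚ` on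
even generators `x_i`, even `u_i` (= `dθ_i`), odd `θ_i`, odd `e_i` (= `dx^i`), as the free
`ℚ`-module on the normally-ordered monomial basis `(a, b, S, T) ↦ x^a u^b θ_S e_T`.

`dRham` is the de Rham differential (`d x_i = e_i`, `d θ_i = u_i`, `d e_i = d u_i = 0`),
`Wmul` is multiplication by `ω = ∑ i, e_i u_i`, `AlphaOp` sends
`f · e_1⋯e_n ↦ -∑ i, (∂_{θ_i} f) ιᵢ(e_1⋯e_n)` (for `f` even), and `DeltaTimesTop` is
`f · e_1⋯e_n ↦ (∑ i ∂_{x_i}∂_{θ_i} f) · e_1⋯e_n`, the BV Laplacian of the coefficient.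

Statement: for `f` even in the subalgebra generated by the `x`'s and `θ`'s,
with `α := -∑ i (∂_{θ_i} f) ιᵢ(e_1⋯e_n)`, there is `β` with
`d α = (∑ i ∂_{x_i}∂_{θ_i} f) e_1⋯e_n + ω β`.
-/

noncomputable section

variable (n : ℕ)

/-- normally ordered monomial basis `x^a u^b θ_S e_T` -/
abbrev DBasis := (Fin n →₀ ℕ) × (Fin n →₀ ℕ) × Finset (Fin n) × Finset (Fin n)

/-- the free supercommutative superalgebra on even `x_i, u_i` and odd `θ_i, e_i` -/
abbrev DForms := DBasis n →₀ ℚ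

/-- the Koszul sign `(-1)^{#{j ∈ S | j < i}}` -/
def insSign (i : Fin n) (S : Finset (Fin n)) : ℚ :=
  (-1) ^ (S.filter (· < i)).card

/-- extend a map defined on basis monomials to a linear endomorphism -/
def ofBasis (f : DBasis n → DForms n) : DForms n →ₗ[ℚ] DForms n :=
  Finsupp.lsum ℕ fun b => LinearMap.smulRight (LinearMap.id : ℚ →ₗ[ℚ] ℚ) (f b)

/-- the de Rham differential `d` (`d x_i = e_i`, `d θ_i = u_i`, `d e_i = d u_i = 0`) -/
def dRham : DForms n →ₗ[ℚ] DForms n :=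
  ofBasis n fun b =>
    (∑ i ∈ b.2.2.2ᶜ,
      ((b.1 i : ℚ) * (-1) ^ b.2.2.1.card * insSign n i b.2.2.2) •
        Finsupp.single (b.1 - Finsupp.single i 1, b.2.1, b.2.2.1, insert i b.2.2.2) (1 : ℚ))
    + ∑ i ∈ b.2.2.1,
        insSign n i b.2.2.1 •
          Finsupp.single (b.1, b.2.1 + Finsupp.single i 1, b.2.2.1.erase i, b.2.2.2) (1 : ℚ)

/-- multiplication by the odd symplectic form `ω = ∑ i, e_i u_i` -/
def Wmul : DForms n →ₗ[ℚ] DForms n :=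
  ofBasis n fun b => ∑ i ∈ b.2.2.2ᶜ,
    ((-1 : ℚ) ^ b.2.2.1.card * insSign n i b.2.2.2) •
      Finsupp.single (b.1, b.2.1 + Finsupp.single i 1, b.2.2.1, insert i b.2.2.2) (1 : ℚ)

/-- `α = (-1)^{|f|+1} ∑ i, (∂_{θ_i} f) ιᵢ(e_T)`; for even `f` this is
`-∑ i, (∂_{θ_i} f) ιᵢ(e_T)` -/
def AlphaOp : DForms n →ₗ[ℚ] DForms n :=
  ofBasis n fun b => ∑ i ∈ b.2.2.1 ∩ b.2.2.2,
    ((-1 : ℚ) ^ (b.2.2.1.card + 1) * insSign n i b.2.2.1 * insSign n i b.2.2.2) •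
      Finsupp.single (b.1, b.2.1, b.2.2.1.erase i, b.2.2.2.erase i) (1 : ℚ)

/-- the BV Laplacian applied to the coefficient function:
`f · e_T ↦ (∑ i, ∂_{x_i} ∂_{θ_i} f) · e_T` -/
def DeltaTimesTop : DForms n →ₗ[ℚ] DForms n :=
  ofBasis n fun b => ∑ i ∈ b.2.2.1,
    ((b.1 i : ℚ) * insSign n i b.2.2.1) •
      Finsupp.single (b.1 - Finsupp.single i 1, b.2.1, b.2.2.1.erase i, b.2.2.2) (1 : ℚ)

lemma ofBasis_single (f : DBasis n → DForms n) (b : DBasis n) (c : ℚ) :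
    ofBasis n f (Finsupp.single b c) = c • f b := by
  simp [ofBasis]

lemma insSign_mul_self (i : Fin n) (S : Finset (Fin n)) : insSign n i S * insSign n i S = 1 := by
  rw [insSign, ← pow_add]
  exact Even.neg_one_pow ⟨_, rfl⟩

lemma insSign_erase_self (j : Fin n) (T : Finset (Fin n)) :
    insSign n j (T.erase j) = insSign n j T := by
  unfold insSign
  congr 2
  ext k
  simp only [Finset.mem_filter, Finset.mem_erase]
  constructor
  · rintro ⟨⟨-, hk⟩, hlt⟩; exact ⟨hk, hlt⟩
  · rintro ⟨hk, hlt⟩; exact ⟨⟨ne_of_lt hlt, hk⟩, hlt⟩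

lemma insSign_insert (i j : Fin n) (s : Finset (Fin n)) (hi : i ∉ s) :
    insSign n j (insert i s) = (if i < j then -1 else 1) * insSign n j s := by
  unfold insSign
  rw [Finset.filter_insert]
  by_cases h : i < j
  · rw [if_pos h, if_pos h,
      Finset.card_insert_of_notMem (fun hm => hi (Finset.mem_of_mem_filter _ hm)), pow_succ]
    ring
  · rw [if_neg h, if_neg h, one_mul]

lemma insSign_erase (i j : Fin n) (T : Finset (Fin n)) (hi : i ∈ T) :
    insSign n j T = (if i < j then -1 else 1) * insSign n j (T.erase i) := by
  conv_lhs => rw [← Finset.insert_erase hi]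
  exact insSign_insert n i j _ (Finset.notMem_erase i T)

lemma insSign_erase' (i j : Fin n) (T : Finset (Fin n)) (hi : i ∈ T) :
    insSign n j (T.erase i) = (if i < j then -1 else 1) * insSign n j T := by
  rw [insSign_erase n i j T hi]
  split_ifs <;> ring

/-- the auxiliary `β` contribution for a single basis monomial -/
def betaAux (b : DBasis n) : DForms n :=
  ∑ i ∈ b.2.2.1, ∑ j ∈ b.2.2.1.erase i,
    (-(1/2 : ℚ) * insSign n i b.2.2.1 * insSign n j b.2.2.1 *
        insSign n i Finset.univ * insSign n j Finset.univ) •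
      Finsupp.single (b.1, 0, (b.2.2.1.erase i).erase j,
        ((Finset.univ : Finset (Fin n)).erase i).erase j) (1 : ℚ)

lemma sum_erase_symm {M : Type*} [AddCommMonoid M] (S : Finset (Fin n)) (F : Fin n → Fin n → M) :
    ∑ i ∈ S, ∑ j ∈ S.erase i, F i j = ∑ i ∈ S, ∑ j ∈ S.erase i, F j i := by
  rw [Finset.sum_comm' (s' := fun y => S.erase y) (t' := S) ?_]
  · intro x y
    simp only [Finset.mem_erase]
    constructor
    · rintro ⟨hx, hyx, hy⟩; exact ⟨⟨(Ne.symm hyx), hx⟩, hy⟩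
    · rintro ⟨⟨hxy, hx⟩, hy⟩; exact ⟨hx, Ne.symm hxy, hy⟩

lemma key (a : Fin n →₀ ℕ) (S : Finset (Fin n)) (hm : Even S.card) :
    dRham n (AlphaOp n (Finsupp.single (a, 0, S, Finset.univ) 1))
      = DeltaTimesTop n (Finsupp.single (a, 0, S, Finset.univ) 1)
        + Wmul n (betaAux n (a, 0, S, Finset.univ)) := by
  simp only [AlphaOp, ofBasis_single, one_smul, Finset.inter_univ, map_sum, map_smul,
    dRham, Finset.compl_erase, Finset.compl_univ, zero_add, Finset.sum_insert,
    Finset.notMem_empty, Finset.sum_empty, add_zero, not_false_iff, smul_add,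
    Finset.sum_add_distrib]
  congr 1
  · -- first piece = DeltaTimesTop
    simp only [DeltaTimesTop, ofBasis_single, one_smul]
    refine Finset.sum_congr rfl fun i hi => ?_
    rw [smul_smul, Finset.insert_erase (Finset.mem_univ i), insSign_erase_self]
    congr 1
    have hc : (S.erase i).card + 1 = S.card := Finset.card_erase_add_one hi
    rw [← hc]
    have h1 : (-1:ℚ)^((S.erase i).card+1+1) * (-1)^((S.erase i).card) = 1 := by
      rw [← pow_add]; exact Even.neg_one_pow ⟨(S.erase i).card+1, by ring⟩
    have h2 : insSign n i Finset.univ * insSign n i Finset.univ = 1 := insSign_mul_self n i _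
    linear_combination (↑(a i) * insSign n i S * insSign n i Finset.univ * insSign n i Finset.univ) * h1
      + (↑(a i) * insSign n i S) * h2
  · -- second piece = Wmul betaAux
    simp only [betaAux, map_sum, map_smul, Wmul, ofBasis_single, one_smul,
      Finset.compl_erase, Finset.compl_univ, zero_add, Finset.smul_sum, smul_smul]
    trans (∑ i ∈ S, ∑ j ∈ S.erase i,
      ((-(1 / 2) * insSign n i S * insSign n j S * insSign n i Finset.univ * insSign n j Finset.univ *
          (1 * ((-1) ^ ((S.erase i).erase j).card * insSign n j ((Finset.univ.erase i).erase j)))) •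
        Finsupp.single (a, Finsupp.single j 1, (S.erase i).erase j,
          insert j ((Finset.univ.erase i).erase j)) (1:ℚ)
      + (-(1 / 2) * insSign n i S * insSign n j S * insSign n i Finset.univ * insSign n j Finset.univ *
          (1 * ((-1) ^ ((S.erase i).erase j).card * insSign n i ((Finset.univ.erase i).erase j)))) •
        Finsupp.single (a, Finsupp.single i 1, (S.erase i).erase j,
          insert i ((Finset.univ.erase i).erase j)) (1:ℚ)))
    · simp only [Finset.sum_add_distrib]
      rw [sum_erase_symm n S (fun i j =>
        (-(1 / 2) * insSign n i S * insSign n j S * insSign n i Finset.univ * insSign n j Finset.univ *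
            (1 * ((-1:ℚ) ^ ((S.erase i).erase j).card * insSign n i ((Finset.univ.erase i).erase j)))) •
          Finsupp.single (a, Finsupp.single i 1, (S.erase i).erase j,
            insert i ((Finset.univ.erase i).erase j)) (1:ℚ))]
      rw [← Finset.sum_add_distrib]
      refine Finset.sum_congr rfl fun i hi => ?_
      rw [← Finset.sum_add_distrib]
      refine Finset.sum_congr rfl fun j hj => ?_
      have hne : j ≠ i := (Finset.mem_erase.mp hj).1
      have hjS : j ∈ S := (Finset.mem_erase.mp hj).2
      rw [Finset.erase_right_comm (s := S) (a := j) (b := i),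
        Finset.erase_right_comm (s := (Finset.univ : Finset (Fin n))) (a := j) (b := i),
        insSign_erase_self,
        Finset.insert_erase (Finset.mem_erase.mpr ⟨hne, Finset.mem_univ j⟩),
        ← add_smul]
      have hc1 : ((S.erase i).erase j).card + 1 = (S.erase i).card :=
        Finset.card_erase_add_one hj
      have hc2 : (S.erase i).card + 1 = S.card := Finset.card_erase_add_one hi
      have heven : Even ((S.erase i).erase j).card := by
        rw [Nat.even_iff] at hm ⊢; omega
      rw [Even.neg_one_pow heven, Odd.neg_one_pow (Even.add_one hm),
        insSign_erase' n i j Finset.univ (Finset.mem_univ i),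
        insSign_erase' n i j S hi]
      have hU := insSign_mul_self n j Finset.univ
      congr 1
      split_ifs with hlt
      · linear_combination (-(insSign n i S * insSign n j S * insSign n i Finset.univ)) * hU
      · linear_combination (insSign n i S * insSign n j S * insSign n i Finset.univ) * hU
    · refine Finset.sum_congr rfl fun i hi => Finset.sum_congr rfl fun j hj => ?_
      rw [Finset.sum_insert (by simp [(Finset.mem_erase.mp hj).1]),
        Finset.sum_insert (Finset.notMem_empty i), Finset.sum_empty, add_zero]
/-- For `v = f e_1⋯e_n` with `f` even, `d (α v) = (Δ_BV f) e_1⋯e_n` modulo `ω`-exact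
terms: the spectral sequence differential `δ₂ = d ∘ ω⁻¹ ∘ d` is the BV Laplacian. -/
theorem delta2_is_BV_laplacian (v : DForms n)
    (hsupp : ∀ b ∈ v.support,
      b.2.1 = 0 ∧ b.2.2.2 = Finset.univ ∧ Even b.2.2.1.card) :
    ∃ β : DForms n, dRham n (AlphaOp n v) = DeltaTimesTop n v + Wmul n β := by
  classical
  refine ⟨∑ b ∈ v.support, (v b) • betaAux n b, ?_⟩
  have h1 : dRham n (AlphaOp n v)
      = ∑ b ∈ v.support, (v b) • dRham n (AlphaOp n (Finsupp.single b 1)) := by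
    conv_lhs => rw [← Finsupp.sum_single v, Finsupp.sum]
    rw [map_sum, map_sum]
    refine Finset.sum_congr rfl fun b hb => ?_
    rw [← Finsupp.smul_single_one b (v b), map_smul, map_smul]
  have h2 : DeltaTimesTop n v
      = ∑ b ∈ v.support, (v b) • DeltaTimesTop n (Finsupp.single b 1) := by
    conv_lhs => rw [← Finsupp.sum_single v, Finsupp.sum]
    rw [map_sum]
    refine Finset.sum_congr rfl fun b hb => ?_
    rw [← Finsupp.smul_single_one b (v b), map_smul]
  have h3 : Wmul n (∑ b ∈ v.support, (v b) • betaAux n b)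
      = ∑ b ∈ v.support, (v b) • Wmul n (betaAux n b) := by
    rw [map_sum]; simp only [map_smul]
  rw [h1, h2, h3, ← Finset.sum_add_distrib]
  refine Finset.sum_congr rfl fun b hb => ?_
  obtain ⟨a, w, S, T⟩ := b
  obtain ⟨hw, hT, hS⟩ := hsupp _ hb
  simp only at hw hT hS
  subst hw; subst hT
  rw [key n a S hS, smul_add]

end
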